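/- Let λ be a real number. For every integer n ≥ 1 and every real x, one has M_{n+1,λ}/(n+1) = (x+1)_{n,λ} + Σ_{j=1}^{n} Σ_{k=1}^{j} C(n,j) (x+1)_{n-j,λ} (-1)^k k! · B_{j,k}(β_{1,λ}(x), β_{2,λ}(x), …, β_{j-k+1,λ}(x)), where M_{m,λ} = (2)_{m,λ} - (1)_{m,λ} are the dimorphic Mersenne numbers and B_{j,k} denotes the incomplete Bell polynomial. -/

import Mathlib

/-- The degenerate falling factorial `(x)_{n,λ} = x (x - λ) (x - 2λ) ⋯ (x - (n-1)λ)`,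
with `(x)_{0,λ} = 1`. -/
def degFallingFactorial (lam x : ℝ) (n : ℕ) : ℝ :=
  ∏ i ∈ Finset.range n, (x - i * lam)

/-- The degenerate exponential `e_λ^x(t) = ∑_{n=0}^∞ (x)_{n,λ} t^n/n!` as a formal
power series in `ℝ[[t]]`. -/
noncomputable def degExpSeries (lam x : ℝ) : PowerSeries ℝ :=
  PowerSeries.mk fun n => degFallingFactorial lam x n / (n.factorial : ℝ)

/-- The formal power series `(e_λ(t) - 1)/t`, whose constant term is `1`. -/
noncomputable def degExpSubOneDivT (lam : ℝ) : PowerSeries ℝ :=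
  PowerSeries.mk fun n => degFallingFactorial lam 1 (n + 1) / ((n + 1).factorial : ℝ)

/-- The generating series `(t/(e_λ(t)-1)) ⬝ e_λ^x(t) = ∑_{n=0}^∞ β_{n,λ}(x) t^n/n!` of the
degenerate Bernoulli polynomials, where `t/(e_λ(t)-1)` denotes the multiplicative inverse
of the series `(e_λ(t)-1)/t`. -/
noncomputable def degBernoulliSeries (lam x : ℝ) : PowerSeries ℝ :=
  (degExpSubOneDivT lam)⁻¹ * degExpSeries lam x

/-- The degenerate Bernoulli polynomial `β_{n,λ}(x)`, read off from its generating series. -/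
noncomputable def degBernoulli (lam x : ℝ) (n : ℕ) : ℝ :=
  (n.factorial : ℝ) * PowerSeries.coeff n (degBernoulliSeries lam x)

/-- The dimorphic Mersenne number `M_{n,λ} = (2)_{n,λ} - (1)_{n,λ}`. -/
def dimorphicMersenne (lam : ℝ) (n : ℕ) : ℝ :=
  degFallingFactorial lam 2 n - degFallingFactorial lam 1 n

/-- The incomplete Bell polynomial `B_{n,k}(x_1, …, x_{n-k+1})`: the sum over all tuples of
nonnegative integers `l_1, …, l_{n-k+1}` with `l_1 + ⋯ + l_{n-k+1} = k` and
`l_1 + 2 l_2 + ⋯ + (n-k+1) l_{n-k+1} = n` of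
`(n!/(l_1! ⋯ l_{n-k+1}!)) (x_1/1!)^{l_1} ⋯ (x_{n-k+1}/(n-k+1)!)^{l_{n-k+1}}`.
The arguments are given by `x : ℕ → ℝ`, with `x i` playing the role of `x_i`. -/
noncomputable def incompleteBell (n k : ℕ) (x : ℕ → ℝ) : ℝ :=
  ∑ l ∈ (Fintype.piFinset fun _ : Fin (n - k + 1) => Finset.range (n + 1)).filter
      (fun l => (∑ i, l i) = k ∧ (∑ i, (i.1 + 1) * l i) = n),
    ((n.factorial : ℝ) / ∏ i, ((l i).factorial : ℝ)) *
      ∏ i, (x (i.1 + 1) / ((i.1 + 1).factorial : ℝ)) ^ l i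

open Finset

lemma dFF_zero (lam x : ℝ) : degFallingFactorial lam x 0 = 1 := rfl

lemma dFF_succ (lam x : ℝ) (n : ℕ) :
    degFallingFactorial lam x (n + 1) = degFallingFactorial lam x n * (x - n * lam) :=
  Finset.prod_range_succ _ _

lemma ffVandermonde (lam x y : ℝ) (n : ℕ) :
    degFallingFactorial lam (x + y) n =
      ∑ j ∈ Finset.range (n + 1), (n.choose j : ℝ) * degFallingFactorial lam x j *
        degFallingFactorial lam y (n - j) := by
  induction n with
  | zero => simp [degFallingFactorial]
  | succ n ih =>
    have key : ∀ j ∈ Finset.range (n + 1),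
        (n.choose j : ℝ) * degFallingFactorial lam x j * degFallingFactorial lam y (n - j)
          * (x + y - n * lam)
        = (n.choose j : ℝ) * degFallingFactorial lam x (j + 1) * degFallingFactorial lam y (n - j)
          + (n.choose j : ℝ) * degFallingFactorial lam x j
            * degFallingFactorial lam y (n + 1 - j) := by
      intro j hj
      rw [Finset.mem_range] at hj
      have hj' : j ≤ n := Nat.lt_succ_iff.mp hj
      have h1 : n + 1 - j = (n - j) + 1 := by omega
      have h2 : ((n - j : ℕ) : ℝ) = (n : ℝ) - j := by
        push_cast [Nat.cast_sub hj']; ring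
      rw [dFF_succ lam x j, h1, dFF_succ lam y (n - j), h2]
      ring
    rw [dFF_succ, ih, Finset.sum_mul, Finset.sum_congr rfl key, Finset.sum_add_distrib]
    have hBs : ∑ j ∈ Finset.range (n + 1), (n.choose j : ℝ) * degFallingFactorial lam x j
          * degFallingFactorial lam y (n + 1 - j)
        = (∑ j ∈ Finset.range (n + 1), (n.choose (j+1) : ℝ) * degFallingFactorial lam x (j+1)
            * degFallingFactorial lam y (n - j)) + degFallingFactorial lam y (n + 1) := by
      rw [Finset.sum_range_succ' (fun j => (n.choose j : ℝ) * degFallingFactorial lam x j *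
          degFallingFactorial lam y (n + 1 - j)) n]
      rw [Finset.sum_range_succ (fun j => (n.choose (j+1) : ℝ) * degFallingFactorial lam x (j+1) *
          degFallingFactorial lam y (n - j)) n]
      simp only [Nat.choose_succ_self, Nat.cast_zero, zero_mul, add_zero, Nat.choose_zero_right,
        Nat.cast_one, one_mul, dFF_zero, Nat.sub_zero]
      congr 1
      apply Finset.sum_congr rfl
      intro j hj
      rw [Finset.mem_range] at hj
      have : n + 1 - (j + 1) = n - j := by omega
      rw [this]
    rw [hBs]
    rw [Finset.sum_range_succ' (fun j => ((n+1).choose j : ℝ) * degFallingFactorial lam x j *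
        degFallingFactorial lam y (n + 1 - j)) (n + 1)]
    have e1 : ∀ j ∈ Finset.range (n + 1),
        ((n+1).choose (j+1) : ℝ) * degFallingFactorial lam x (j+1) *
          degFallingFactorial lam y (n + 1 - (j+1))
        = (n.choose j : ℝ) * degFallingFactorial lam x (j + 1) * degFallingFactorial lam y (n - j)
          + (n.choose (j+1) : ℝ) * degFallingFactorial lam x (j+1) *
            degFallingFactorial lam y (n - j) := by
      intro j hj
      have : n + 1 - (j + 1) = n - j := by omega
      rw [this, Nat.choose_succ_succ n j]
      push_cast; ring
    rw [Finset.sum_congr rfl e1, Finset.sum_add_distrib]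
    simp [dFF_zero]
    ring

lemma coeff_degExpSeries (lam x : ℝ) (n : ℕ) :
    PowerSeries.coeff n (degExpSeries lam x) = degFallingFactorial lam x n / n.factorial :=
  PowerSeries.coeff_mk _ _

lemma degExpSeries_mul (lam x y : ℝ) :
    degExpSeries lam x * degExpSeries lam y = degExpSeries lam (x + y) := by
  ext n
  rw [PowerSeries.coeff_mul, Finset.Nat.sum_antidiagonal_eq_sum_range_succ_mk,
    coeff_degExpSeries, ffVandermonde, Finset.sum_div]
  apply Finset.sum_congr rfl
  intro j hj
  rw [Finset.mem_range] at hj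
  have hj' : j ≤ n := Nat.lt_succ_iff.mp hj
  simp only [coeff_degExpSeries]
  rw [Nat.cast_choose ℝ hj']
  have h1 : ((j.factorial : ℝ)) ≠ 0 := Nat.cast_ne_zero.mpr (Nat.factorial_ne_zero _)
  have h2 : (((n - j).factorial : ℝ)) ≠ 0 := Nat.cast_ne_zero.mpr (Nat.factorial_ne_zero _)
  have h3 : ((n.factorial : ℝ)) ≠ 0 := Nat.cast_ne_zero.mpr (Nat.factorial_ne_zero _)
  field_simp

lemma constCoeff_E (lam x : ℝ) : PowerSeries.constantCoeff (degExpSeries lam x) = 1 := by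
  rw [← PowerSeries.coeff_zero_eq_constantCoeff, coeff_degExpSeries]
  simp [dFF_zero]

lemma coeff_D (lam : ℝ) (n : ℕ) :
    PowerSeries.coeff n (degExpSubOneDivT lam) =
      degFallingFactorial lam 1 (n + 1) / ((n + 1).factorial : ℝ) :=
  PowerSeries.coeff_mk _ _

lemma constCoeff_D (lam : ℝ) : PowerSeries.constantCoeff (degExpSubOneDivT lam) = 1 := by
  rw [← PowerSeries.coeff_zero_eq_constantCoeff, coeff_D]
  simp [degFallingFactorial]

lemma E1_mul_D (lam : ℝ) :
    degExpSeries lam 1 * degExpSubOneDivT lam =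
      PowerSeries.mk (fun n => dimorphicMersenne lam (n + 1) / ((n + 1).factorial : ℝ)) := by
  ext n
  rw [PowerSeries.coeff_mul, Finset.Nat.sum_antidiagonal_eq_sum_range_succ_mk,
    PowerSeries.coeff_mk]
  have h2 : degFallingFactorial lam 2 (n + 1) =
      ∑ j ∈ Finset.range (n + 2), ((n+1).choose j : ℝ) * degFallingFactorial lam 1 j *
        degFallingFactorial lam 1 (n + 1 - j) := by
    have := ffVandermonde lam 1 1 (n + 1)
    norm_num at this ⊢
    exact this
  have h3 : dimorphicMersenne lam (n + 1) =
      ∑ j ∈ Finset.range (n + 1), ((n+1).choose j : ℝ) * degFallingFactorial lam 1 j *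
        degFallingFactorial lam 1 (n + 1 - j) := by
    rw [dimorphicMersenne, h2, Finset.sum_range_succ]
    simp [dFF_zero]
  rw [h3, Finset.sum_div]
  apply Finset.sum_congr rfl
  intro j hj
  rw [Finset.mem_range] at hj
  have hj' : j ≤ n := Nat.lt_succ_iff.mp hj
  have hj2 : j ≤ n + 1 := le_trans hj' (Nat.le_succ n)
  have he : n - j + 1 = n + 1 - j := by omega
  simp only [coeff_degExpSeries, coeff_D, he]
  rw [Nat.cast_choose ℝ hj2]
  have h1 : ((j.factorial : ℝ)) ≠ 0 := Nat.cast_ne_zero.mpr (Nat.factorial_ne_zero _)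
  have h2' : (((n + 1 - j).factorial : ℝ)) ≠ 0 := Nat.cast_ne_zero.mpr (Nat.factorial_ne_zero _)
  have h3' : (((n+1).factorial : ℝ)) ≠ 0 := Nat.cast_ne_zero.mpr (Nat.factorial_ne_zero _)
  field_simp

noncomputable def Fser (lam x : ℝ) : PowerSeries ℝ :=
  (degExpSeries lam x)⁻¹ * degExpSubOneDivT lam

lemma B_mul_F (lam x : ℝ) : degBernoulliSeries lam x * Fser lam x = 1 := by
  rw [degBernoulliSeries, Fser]
  have hE : degExpSeries lam x * (degExpSeries lam x)⁻¹ = 1 :=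
    PowerSeries.mul_inv_cancel _ (by rw [constCoeff_E]; norm_num)
  have hD : (degExpSubOneDivT lam)⁻¹ * degExpSubOneDivT lam = 1 :=
    PowerSeries.inv_mul_cancel _ (by rw [constCoeff_D]; norm_num)
  calc (degExpSubOneDivT lam)⁻¹ * degExpSeries lam x * ((degExpSeries lam x)⁻¹ *
      degExpSubOneDivT lam)
      = (degExpSeries lam x * (degExpSeries lam x)⁻¹) * ((degExpSubOneDivT lam)⁻¹ *
        degExpSubOneDivT lam) := by ring
    _ = 1 := by rw [hE, hD, mul_one]

lemma constCoeff_B (lam x : ℝ) :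
    PowerSeries.constantCoeff (degBernoulliSeries lam x) = 1 := by
  rw [degBernoulliSeries, map_mul, PowerSeries.constantCoeff_inv, constCoeff_D, constCoeff_E]
  norm_num

lemma constCoeff_F (lam x : ℝ) : PowerSeries.constantCoeff (Fser lam x) = 1 := by
  have := congrArg (PowerSeries.constantCoeff) (B_mul_F lam x)
  rw [map_mul, constCoeff_B, one_mul, map_one] at this
  exact this

lemma coeff_mul_pow_eq_zero {g h : PowerSeries ℝ}
    (hg : PowerSeries.constantCoeff g = 0) {j k : ℕ} (hjk : j < k) :
    PowerSeries.coeff j (h * g ^ k) = 0 := by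
  have hx : PowerSeries.X ∣ g := PowerSeries.X_dvd_iff.mpr hg
  have hxk : (PowerSeries.X : PowerSeries ℝ) ^ k ∣ h * g ^ k :=
    Dvd.dvd.mul_left (pow_dvd_pow_of_dvd hx k) h
  exact (PowerSeries.X_pow_dvd_iff.mp hxk) j hjk

lemma coeff_F_eq (lam x : ℝ) (j : ℕ) (hj : 1 ≤ j) :
    PowerSeries.coeff j (Fser lam x) =
      ∑ k ∈ Finset.Icc 1 j, (-1 : ℝ) ^ k *
        PowerSeries.coeff j ((degBernoulliSeries lam x - 1) ^ k) := by
  set B := degBernoulliSeries lam x with hB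
  set g := B - 1 with hgdef
  have hg0 : PowerSeries.constantCoeff g = 0 := by
    rw [hgdef, map_sub, constCoeff_B, map_one, sub_self]
  have geom : (1 + g) * (∑ k ∈ Finset.range (j + 1), (-g) ^ k)
      = 1 - (-g) ^ (j + 1) := by
    have := geom_sum_mul (-g) (j + 1)
    have h2 : (-g - 1) = -(1 + g) := by ring
    rw [h2] at this
    have : -((∑ i ∈ Finset.range (j + 1), (-g) ^ i) * (1 + g)) = (-g) ^ (j+1) - 1 := by
      rw [← this]; ring
    linear_combination -this
  have hBg : B = 1 + g := by rw [hgdef]; ring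
  have key : (∑ k ∈ Finset.range (j + 1), (-g) ^ k)
      = Fser lam x - Fser lam x * (-g) ^ (j + 1) := by
    have h1 : Fser lam x * ((1 + g) * (∑ k ∈ Finset.range (j + 1), (-g) ^ k))
        = Fser lam x * (1 - (-g) ^ (j + 1)) := by rw [geom]
    have h2 : Fser lam x * (1 + g) = 1 := by
      rw [← hBg, mul_comm]; exact B_mul_F lam x
    calc (∑ k ∈ Finset.range (j + 1), (-g) ^ k)
        = Fser lam x * (1 + g) * (∑ k ∈ Finset.range (j + 1), (-g) ^ k) := by
          rw [h2, one_mul]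
      _ = Fser lam x * (1 - (-g) ^ (j + 1)) := by rw [mul_assoc, h1]
      _ = Fser lam x - Fser lam x * (-g) ^ (j + 1) := by ring
  have hco := congrArg (PowerSeries.coeff j) key
  rw [map_sub, map_sum] at hco
  have hz : PowerSeries.coeff j (Fser lam x * (-g) ^ (j + 1)) = 0 := by
    have hg0' : PowerSeries.constantCoeff (-g) = 0 := by rw [map_neg, hg0, neg_zero]
    exact coeff_mul_pow_eq_zero hg0' (Nat.lt_succ_self j)
  rw [hz, sub_zero] at hco
  -- split off k = 0
  have hsplit : ∑ k ∈ Finset.range (j + 1), PowerSeries.coeff j ((-g) ^ k)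
      = PowerSeries.coeff j ((-g) ^ 0)
        + ∑ k ∈ Finset.Icc 1 j, PowerSeries.coeff j ((-g) ^ k) := by
    rw [Finset.range_eq_Ico, Finset.sum_eq_sum_Ico_succ_bot (Nat.succ_pos j),
      Nat.succ_eq_add_one, Finset.Ico_add_one_right_eq_Icc]
  have h0 : PowerSeries.coeff j ((-g) ^ 0) = 0 := by
    rw [pow_zero, PowerSeries.coeff_one]
    simp [Nat.one_le_iff_ne_zero.mp hj]
  rw [hsplit, h0, zero_add] at hco
  rw [← hco]
  apply Finset.sum_congr rfl
  intro k _
  rw [neg_pow]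
  rw [show ((-1 : PowerSeries ℝ) ^ k * g ^ k) = (PowerSeries.C) ((-1 : ℝ) ^ k) * g ^ k by
    rw [map_pow, map_neg, map_one]]
  rw [PowerSeries.coeff_C_mul]

@[to_additive sum_Icc_one_eq]
lemma prod_Icc_one_eq {M : Type*} [CommMonoid M] (N : ℕ) (f : ℕ → M) :
    ∏ m ∈ Finset.Icc 1 N, f m = ∏ i ∈ Finset.range N, f (i + 1) := by
  apply Finset.prod_nbij' (fun m => m - 1) (fun i => i + 1)
  · intro a ha; rw [Finset.mem_Icc] at ha; rw [Finset.mem_range]; omega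
  · intro a ha; rw [Finset.mem_range] at ha; rw [Finset.mem_Icc]; omega
  · intro a ha; rw [Finset.mem_Icc] at ha; omega
  · intro a _; omega
  · intro a ha; rw [Finset.mem_Icc] at ha
    congr 1; omega

lemma coeff_mul_of_low_zero {u v : PowerSeries ℝ} {j : ℕ}
    (h : ∀ i ≤ j, PowerSeries.coeff i u = 0) :
    PowerSeries.coeff j (u * v) = 0 := by
  rw [PowerSeries.coeff_mul]
  apply Finset.sum_eq_zero
  intro p hp
  rw [Finset.HasAntidiagonal.mem_antidiagonal] at hp
  rw [h p.1 (by omega), zero_mul]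
section BellCore

open Finset PowerSeries

lemma bell_core (lam x : ℝ) {j k : ℕ} (hk1 : 1 ≤ k) (hkj : k ≤ j) :
    (j.factorial : ℝ) * PowerSeries.coeff j ((degBernoulliSeries lam x - 1) ^ k)
      = (k.factorial : ℝ) * incompleteBell j k (fun m => degBernoulli lam x m) := by
  classical
  set c : ℕ → ℝ := fun m => PowerSeries.coeff m (degBernoulliSeries lam x) with hc
  have hNj : j - k + 1 ≤ j := by omega
  set P : PowerSeries ℝ := ∑ m ∈ Finset.Icc 1 j, PowerSeries.C (c m) * X ^ m with hP
  have hcoeffP : ∀ i : ℕ, PowerSeries.coeff i P = if i ∈ Finset.Icc 1 j then c i else 0 := by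
    intro i
    rw [hP, map_sum]
    simp only [PowerSeries.coeff_C_mul_X_pow]
    rw [Finset.sum_ite_eq (Finset.Icc 1 j) i c]
  have step1 : PowerSeries.coeff j ((degBernoulliSeries lam x - 1) ^ k)
      = PowerSeries.coeff j (P ^ k) := by
    obtain ⟨S, hS⟩ := sub_dvd_pow_sub_pow (degBernoulliSeries lam x - 1) P k
    have hlow : ∀ i ≤ j, PowerSeries.coeff i (degBernoulliSeries lam x - 1 - P) = 0 := by
      intro i hi
      rw [map_sub, map_sub, hcoeffP]
      rcases Nat.eq_zero_or_pos i with h0 | h1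
      · subst h0
        rw [PowerSeries.coeff_zero_eq_constantCoeff, constCoeff_B]
        simp
      · have : i ∈ Finset.Icc 1 j := Finset.mem_Icc.mpr ⟨h1, hi⟩
        rw [if_pos this, PowerSeries.coeff_one, if_neg (by omega)]
        simp [hc]
    have := congrArg (PowerSeries.coeff j) hS
    rw [map_sub, coeff_mul_of_low_zero hlow] at this
    linarith [this.symm]
  rw [step1]
  have step2 : PowerSeries.coeff j (P ^ k)
      = ∑ l ∈ (Finset.piAntidiag (Finset.Icc 1 j) k).filter
          (fun l => ∑ m ∈ Finset.Icc 1 j, m * l m = j),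
          (Nat.multinomial (Finset.Icc 1 j) l : ℝ) * ∏ m ∈ Finset.Icc 1 j, c m ^ l m := by
    rw [hP, Finset.sum_pow_eq_sum_piAntidiag, map_sum]
    have hterm : ∀ l : ℕ → ℕ,
        ((Nat.multinomial (Finset.Icc 1 j) l : PowerSeries ℝ) *
          ∏ m ∈ Finset.Icc 1 j, (PowerSeries.C (c m) * X ^ m) ^ l m)
        = PowerSeries.C ((Nat.multinomial (Finset.Icc 1 j) l : ℝ) *
            ∏ m ∈ Finset.Icc 1 j, c m ^ l m) * X ^ (∑ m ∈ Finset.Icc 1 j, m * l m) := by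
      intro l
      rw [map_mul, map_natCast, map_prod]
      rw [Finset.prod_congr rfl (fun m _ => by
        rw [mul_pow, ← map_pow, ← pow_mul] : ∀ m ∈ Finset.Icc 1 j,
          (PowerSeries.C (c m) * X ^ m) ^ l m
            = PowerSeries.C (c m ^ l m) * X ^ (m * l m))]
      rw [Finset.prod_mul_distrib, ← map_prod, Finset.prod_pow_eq_pow_sum]
      ring
    rw [Finset.sum_congr rfl (fun l _ => congrArg (PowerSeries.coeff j) (hterm l))]
    rw [Finset.sum_congr rfl (fun l _ => PowerSeries.coeff_C_mul_X_pow _ _ _)]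
    rw [Finset.sum_ite, Finset.sum_const_zero, add_zero]
    apply Finset.sum_congr
    · apply Finset.filter_congr
      intro l _
      simp [eq_comm]
    · intro l _; rfl
  rw [step2]
  rw [incompleteBell, Finset.mul_sum, Finset.mul_sum]
  have hbc : ∀ m : ℕ, degBernoulli lam x m / (m.factorial : ℝ) = c m := by
    intro m
    rw [degBernoulli, mul_comm, mul_div_assoc, div_self
      (Nat.cast_ne_zero.mpr (Nat.factorial_ne_zero m)), mul_one]
  have hsupp : ∀ l : ℕ → ℕ, l ∈ (Finset.piAntidiag (Finset.Icc 1 j) k).filter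
      (fun l => ∑ m ∈ Finset.Icc 1 j, m * l m = j) →
      ∀ m : ℕ, l m ≠ 0 → 1 ≤ m ∧ m ≤ j - k + 1 := by
    intro l hl m hm
    rw [Finset.mem_filter, Finset.mem_piAntidiag] at hl
    obtain ⟨⟨hsum, hsub⟩, hwt⟩ := hl
    have hsum' : ∑ m' ∈ Finset.Icc 1 j, l m' = k := hsum
    have hmIcc : m ∈ Finset.Icc 1 j := hsub m hm
    have hm1 : 1 ≤ m ∧ m ≤ j := Finset.mem_Icc.mp hmIcc
    have hdec : ∑ m' ∈ Finset.Icc 1 j, m' * l m'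
        = (∑ m' ∈ Finset.Icc 1 j, (m' - 1) * l m') + ∑ m' ∈ Finset.Icc 1 j, l m' := by
      rw [← Finset.sum_add_distrib]
      apply Finset.sum_congr rfl
      intro m' hm'
      rw [Finset.mem_Icc] at hm'
      obtain ⟨p, rfl⟩ : ∃ p, m' = p + 1 := ⟨m' - 1, by omega⟩
      simp [Nat.succ_mul]
    have h1 : (m - 1) * l m ≤ ∑ m' ∈ Finset.Icc 1 j, (m' - 1) * l m' :=
      Finset.single_le_sum (f := fun m' => (m' - 1) * l m')
        (fun _ _ => Nat.zero_le _) hmIcc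
    have h2 : m - 1 ≤ (m - 1) * l m := Nat.le_mul_of_pos_right _ (Nat.pos_of_ne_zero hm)
    rw [hdec, hsum'] at hwt
    set A := ∑ m' ∈ Finset.Icc 1 j, (m' - 1) * l m' with hA
    set q := (m - 1) * l m with hq
    omega
  have tsum : ∀ F : ℕ → ℕ, (∀ m, ¬(1 ≤ m ∧ m ≤ j - k + 1) → F m = 0) →
      ∑ m ∈ Finset.Icc 1 j, F m = ∑ i : Fin (j - k + 1), F (i.1 + 1) := by
    intro F hF
    rw [Fin.sum_univ_eq_sum_range (fun i => F (i + 1)) (j - k + 1),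
      ← sum_Icc_one_eq (j - k + 1) F]
    exact (Finset.sum_subset (Finset.Icc_subset_Icc_right hNj) (fun m hm hnm => by
      rw [Finset.mem_Icc] at hm
      rw [Finset.mem_Icc] at hnm
      exact hF m (by omega))).symm
  have tprod : ∀ F : ℕ → ℝ, (∀ m, ¬(1 ≤ m ∧ m ≤ j - k + 1) → F m = 1) →
      ∏ m ∈ Finset.Icc 1 j, F m = ∏ i : Fin (j - k + 1), F (i.1 + 1) := by
    intro F hF
    rw [Fin.prod_univ_eq_prod_range (fun i => F (i + 1)) (j - k + 1),
      ← prod_Icc_one_eq (j - k + 1) F]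
    exact (Finset.prod_subset (Finset.Icc_subset_Icc_right hNj) (fun m hm hnm => by
      rw [Finset.mem_Icc] at hm
      rw [Finset.mem_Icc] at hnm
      exact hF m (by omega))).symm
  apply Finset.sum_nbij' (fun (l : ℕ → ℕ) (i : Fin (j - k + 1)) => l (i.1 + 1))
    (fun (l' : Fin (j - k + 1) → ℕ) (m : ℕ) =>
      if h : m - 1 < j - k + 1 ∧ 1 ≤ m then l' ⟨m - 1, h.1⟩ else 0)
  · -- forward membership
    intro l hl
    have hsl := hsupp l hl
    rw [Finset.mem_filter, Finset.mem_piAntidiag] at hl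
    obtain ⟨⟨hsum, hsub⟩, hwt⟩ := hl
    have hsum' : ∑ m' ∈ Finset.Icc 1 j, l m' = k := hsum
    have hF0 : ∀ m, ¬(1 ≤ m ∧ m ≤ j - k + 1) → l m = 0 := by
      intro m hm; by_contra h; exact hm (hsl m h)
    rw [Finset.mem_filter]
    refine ⟨?_, ?_, ?_⟩
    · rw [Fintype.mem_piFinset]
      intro i
      rw [Finset.mem_range]
      have hi1 : (i.1 + 1) ∈ Finset.Icc 1 j := Finset.mem_Icc.mpr ⟨by omega, by
        have := i.2; omega⟩
      have hle : l (i.1 + 1) ≤ ∑ m' ∈ Finset.Icc 1 j, l m' :=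
        Finset.single_le_sum (f := fun m' => l m') (fun _ _ => Nat.zero_le _) hi1
      show l (i.1 + 1) < j + 1
      omega
    · show ∑ i : Fin (j - k + 1), l (i.1 + 1) = k
      rw [← tsum l hF0]
      exact hsum'
    · show ∑ i : Fin (j - k + 1), (i.1 + 1) * l (i.1 + 1) = j
      rw [← tsum (fun m => m * l m) (fun m hm => by
        show m * l m = 0
        rw [hF0 m hm, mul_zero])]
      exact hwt
  · -- backward membership
    intro l' hl'
    rw [Finset.mem_filter, Fintype.mem_piFinset] at hl'
    obtain ⟨hrange, hsum, hwt⟩ := hl'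
    have hb0 : ∀ m, ¬(1 ≤ m ∧ m ≤ j - k + 1) →
        (if h : m - 1 < j - k + 1 ∧ 1 ≤ m then l' ⟨m - 1, h.1⟩ else 0) = 0 := by
      intro m hm
      rw [dif_neg]
      intro h
      exact hm ⟨h.2, by omega⟩
    have hbval : ∀ i : Fin (j - k + 1),
        (if h : (i.1 + 1) - 1 < j - k + 1 ∧ 1 ≤ i.1 + 1 then l' ⟨(i.1 + 1) - 1, h.1⟩ else 0)
          = l' i := fun i => dif_pos ⟨by omega, by omega⟩
    rw [Finset.mem_filter, Finset.mem_piAntidiag]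
    refine ⟨⟨?_, ?_⟩, ?_⟩
    · show ∑ m ∈ Finset.Icc 1 j,
          (if h : m - 1 < j - k + 1 ∧ 1 ≤ m then l' ⟨m - 1, h.1⟩ else 0) = k
      rw [tsum _ hb0, Finset.sum_congr rfl (fun i _ => hbval i)]
      exact hsum
    · intro m hm
      have hcond : 1 ≤ m ∧ m ≤ j - k + 1 := by
        by_contra h
        exact hm (hb0 m h)
      exact Finset.mem_Icc.mpr ⟨hcond.1, le_trans hcond.2 hNj⟩
    · show ∑ m ∈ Finset.Icc 1 j,
          m * (if h : m - 1 < j - k + 1 ∧ 1 ≤ m then l' ⟨m - 1, h.1⟩ else 0) = j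
      rw [tsum (fun m => m * (if h : m - 1 < j - k + 1 ∧ 1 ≤ m then l' ⟨m - 1, h.1⟩ else 0))
        (fun m hm => by
          show m * (if h : m - 1 < j - k + 1 ∧ 1 ≤ m then l' ⟨m - 1, h.1⟩ else 0) = 0
          rw [hb0 m hm, mul_zero])]
      rw [Finset.sum_congr rfl (fun i _ => by rw [hbval i])]
      exact hwt
  · -- left inverse
    intro l hl
    funext m
    show (if h : m - 1 < j - k + 1 ∧ 1 ≤ m then l ((⟨m - 1, h.1⟩ : Fin (j - k + 1)).1 + 1)
      else 0) = l m
    by_cases h : m - 1 < j - k + 1 ∧ 1 ≤ m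
    · rw [dif_pos h]
      show l (m - 1 + 1) = l m
      congr 1
      omega
    · rw [dif_neg h]
      by_contra hne
      have := hsupp l hl m (fun h0 => hne h0.symm)
      exact h ⟨by omega, this.1⟩
  · -- right inverse
    intro l' _
    funext i
    show (if h : (i.1 + 1) - 1 < j - k + 1 ∧ 1 ≤ i.1 + 1 then l' ⟨(i.1 + 1) - 1, h.1⟩ else 0)
      = l' i
    exact dif_pos ⟨by omega, by omega⟩
  · -- equality of terms
    intro l hl
    have hsl := hsupp l hl
    rw [Finset.mem_filter, Finset.mem_piAntidiag] at hl
    obtain ⟨⟨hsum, hsub⟩, hwt⟩ := hl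
    have hsum' : ∑ m' ∈ Finset.Icc 1 j, l m' = k := hsum
    have hF0 : ∀ m, ¬(1 ≤ m ∧ m ≤ j - k + 1) → l m = 0 := by
      intro m hm; by_contra h; exact hm (hsl m h)
    have prodfact : ∏ m ∈ Finset.Icc 1 j, ((l m).factorial : ℝ)
        = ∏ i : Fin (j - k + 1), ((l (i.1 + 1)).factorial : ℝ) :=
      tprod (fun m => ((l m).factorial : ℝ)) (fun m hm => by
        show ((l m).factorial : ℝ) = 1
        rw [hF0 m hm]; norm_num)
    have prodc : ∏ m ∈ Finset.Icc 1 j, c m ^ l m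
        = ∏ i : Fin (j - k + 1), c (i.1 + 1) ^ l (i.1 + 1) :=
      tprod (fun m => c m ^ l m) (fun m hm => by
        show c m ^ l m = 1
        rw [hF0 m hm, pow_zero])
    have hfne : (∏ m ∈ Finset.Icc 1 j, ((l m).factorial : ℝ)) ≠ 0 :=
      Finset.prod_ne_zero_iff.mpr
        (fun m _ => Nat.cast_ne_zero.mpr (Nat.factorial_ne_zero _))
    have hmult : (Nat.multinomial (Finset.Icc 1 j) l : ℝ)
        = (k.factorial : ℝ) / ∏ m ∈ Finset.Icc 1 j, ((l m).factorial : ℝ) := by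
      rw [eq_div_iff hfne]
      have hspec := Nat.multinomial_spec (Finset.Icc 1 j) l
      rw [hsum'] at hspec
      have := congrArg (fun z : ℕ => (z : ℝ)) hspec
      push_cast at this
      linarith [this]
    show (j.factorial : ℝ) * ((Nat.multinomial (Finset.Icc 1 j) l : ℝ)
        * ∏ m ∈ Finset.Icc 1 j, c m ^ l m)
      = (k.factorial : ℝ) * (((j.factorial : ℝ)
          / ∏ i : Fin (j - k + 1), ((l (i.1 + 1)).factorial : ℝ))
        * ∏ i : Fin (j - k + 1),
            (degBernoulli lam x (i.1 + 1) / ((i.1 + 1).factorial : ℝ)) ^ l (i.1 + 1))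
    have hdeg : ∏ i : Fin (j - k + 1),
          (degBernoulli lam x (i.1 + 1) / ((i.1 + 1).factorial : ℝ)) ^ l (i.1 + 1)
        = ∏ i : Fin (j - k + 1), c (i.1 + 1) ^ l (i.1 + 1) :=
      Finset.prod_congr rfl fun i _ => by rw [hbc (i.1 + 1)]
    rw [hdeg, hmult, ← prodfact, ← prodc]
    ring

end BellCore

/-- Theorem 2: for `n ≥ 1` and any `x`,
`M_{n+1,λ}/(n+1) = (x+1)_{n,λ} + ∑_{j=1}^{n} ∑_{k=1}^{j} C(n,j) (x+1)_{n-j,λ} (-1)^k k!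
B_{j,k}(β_{1,λ}(x), …, β_{j-k+1,λ}(x))`. -/
theorem dimorphicMersenne_eq_sum (lam : ℝ) (n : ℕ) (hn : 1 ≤ n) (x : ℝ) :
    dimorphicMersenne lam (n + 1) / (n + 1 : ℝ) =
      degFallingFactorial lam (x + 1) n +
        ∑ j ∈ Finset.Icc 1 n, ∑ k ∈ Finset.Icc 1 j,
          (n.choose j : ℝ) * degFallingFactorial lam (x + 1) (n - j) *
            (-1 : ℝ) ^ k * (k.factorial : ℝ) *
              incompleteBell j k (fun i => degBernoulli lam x i) := by
  classical
  have hF0 : PowerSeries.coeff 0 (Fser lam x) = 1 := by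
    rw [PowerSeries.coeff_zero_eq_constantCoeff]
    exact constCoeff_F lam x
  have hEF : degExpSeries lam (x + 1) * Fser lam x
      = PowerSeries.mk (fun m => dimorphicMersenne lam (m + 1) / ((m + 1).factorial : ℝ)) := by
    have h1 : degExpSeries lam (x + 1) = degExpSeries lam x * degExpSeries lam 1 :=
      (degExpSeries_mul lam x 1).symm
    rw [Fser, h1]
    have hE : degExpSeries lam x * (degExpSeries lam x)⁻¹ = 1 :=
      PowerSeries.mul_inv_cancel _ (by rw [constCoeff_E]; norm_num)
    calc degExpSeries lam x * degExpSeries lam 1 *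
          ((degExpSeries lam x)⁻¹ * degExpSubOneDivT lam)
        = (degExpSeries lam x * (degExpSeries lam x)⁻¹) *
            (degExpSeries lam 1 * degExpSubOneDivT lam) := by ring
      _ = degExpSeries lam 1 * degExpSubOneDivT lam := by rw [hE, one_mul]
      _ = _ := E1_mul_D lam
  have hcoeff := congrArg (PowerSeries.coeff n) hEF
  rw [PowerSeries.coeff_mul, Finset.Nat.sum_antidiagonal_eq_sum_range_succ_mk,
    PowerSeries.coeff_mk] at hcoeff
  have hnfac : ((n.factorial : ℝ)) ≠ 0 := Nat.cast_ne_zero.mpr (Nat.factorial_ne_zero _)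
  have hn1 : ((n : ℝ) + 1) ≠ 0 := by positivity
  have hmain : dimorphicMersenne lam (n + 1) / (n + 1 : ℝ)
      = (n.factorial : ℝ) * ∑ i ∈ Finset.range (n + 1),
          PowerSeries.coeff i (degExpSeries lam (x + 1)) *
            PowerSeries.coeff (n - i) (Fser lam x) := by
    rw [hcoeff, Nat.factorial_succ]
    push_cast
    field_simp
  rw [hmain]
  rw [Finset.mul_sum]
  -- reflect the sum
  have hrefl := Finset.sum_range_reflect (fun i => (n.factorial : ℝ) *
      (PowerSeries.coeff i (degExpSeries lam (x + 1)) *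
        PowerSeries.coeff (n - i) (Fser lam x))) (n + 1)
  rw [← hrefl]
  have hre : ∀ j ∈ Finset.range (n + 1),
      (n.factorial : ℝ) * (PowerSeries.coeff (n + 1 - 1 - j) (degExpSeries lam (x + 1)) *
        PowerSeries.coeff (n - (n + 1 - 1 - j)) (Fser lam x))
      = (n.factorial : ℝ) * (PowerSeries.coeff (n - j) (degExpSeries lam (x + 1)) *
        PowerSeries.coeff j (Fser lam x)) := by
    intro j hj
    rw [Finset.mem_range] at hj
    have e1 : n + 1 - 1 - j = n - j := by omega
    have e2 : n - (n - j) = j := by omega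
    rw [e1, e2]
  rw [Finset.sum_congr rfl hre]
  -- split off j = 0
  rw [Finset.range_eq_Ico, Finset.sum_eq_sum_Ico_succ_bot (Nat.succ_pos n),
    Nat.succ_eq_add_one, Finset.Ico_add_one_right_eq_Icc]
  have h0 : (n.factorial : ℝ) * (PowerSeries.coeff (n - 0) (degExpSeries lam (x + 1)) *
      PowerSeries.coeff 0 (Fser lam x)) = degFallingFactorial lam (x + 1) n := by
    rw [hF0, Nat.sub_zero, coeff_degExpSeries, mul_one]
    field_simp
  rw [h0]
  congr 1
  apply Finset.sum_congr rfl
  intro j hj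
  rw [Finset.mem_Icc] at hj
  obtain ⟨hj1, hjn⟩ := hj
  -- j-th coefficient of F in terms of Bell polynomials
  have hjfac : ((j.factorial : ℝ)) ≠ 0 := Nat.cast_ne_zero.mpr (Nat.factorial_ne_zero _)
  have hnjfac : (((n - j).factorial : ℝ)) ≠ 0 := Nat.cast_ne_zero.mpr (Nat.factorial_ne_zero _)
  have hT1 : (j.factorial : ℝ) * PowerSeries.coeff j (Fser lam x)
      = ∑ k ∈ Finset.Icc 1 j, (-1 : ℝ) ^ k * ((k.factorial : ℝ) *
          incompleteBell j k (fun m => degBernoulli lam x m)) := by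
    rw [coeff_F_eq lam x j hj1, Finset.mul_sum]
    apply Finset.sum_congr rfl
    intro k hk
    rw [Finset.mem_Icc] at hk
    rw [← bell_core lam x hk.1 hk.2]
    ring
  have hsplit : (n.factorial : ℝ) * (PowerSeries.coeff (n - j) (degExpSeries lam (x + 1)) *
      PowerSeries.coeff j (Fser lam x))
      = (n.choose j : ℝ) * degFallingFactorial lam (x + 1) (n - j) *
          ((j.factorial : ℝ) * PowerSeries.coeff j (Fser lam x)) := by
    rw [coeff_degExpSeries, Nat.cast_choose ℝ hjn]
    field_simp
  rw [hsplit, hT1, Finset.mul_sum]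
  apply Finset.sum_congr rfl
  intro k _
  ring
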